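/- arXiv:2506.16750 — 2 statements merged into one kernel-verified Lean document; each statement's English description precedes it below -/
import Mathlib

section
/- Let N ≥ 1, let v : {0, …, N−1} → ℝ be nonnegative, and let f = Σ_{n=0}^{N−1} v_n 1_{[n,n+1)}. Then the supremum of the autoconvolution is attained at an integer point: ‖f ∗ f‖_{L^∞(ℝ)} = max_{0 ≤ j ≤ 2N−1} (f ∗ f)(j). -/
open MeasureTheory

/-- The autoconvolution of `f`: `(f ∗ f)(x) = ∫ f(t) f(x - t) dt`. -/
noncomputable def autoconv (f : ℝ → ℝ) : ℝ → ℝ := fun x => ∫ t, f t * f (x - t)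

/-- The step function `f = Σ_{n=0}^{N-1} v_n 1_{[n, n+1)}`. -/
noncomputable def stepFun (N : ℕ) (v : Fin N → ℝ) : ℝ → ℝ :=
  fun x => ∑ n : Fin N, v n * (Set.Ico ((n : ℕ) : ℝ) ((n : ℕ) + 1)).indicator 1 x

open Set

/-- triangle bump -/
noncomputable def tri (s : ℝ) : ℝ := max 0 (min s (2 - s))

lemma tri_nonneg (s : ℝ) : 0 ≤ tri s := le_max_left _ _

lemma tri_of_nonpos {s : ℝ} (h : s ≤ 0) : tri s = 0 :=
  max_eq_left ((min_le_left _ _).trans h)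

lemma tri_of_ge_two {s : ℝ} (h : 2 ≤ s) : tri s = 0 :=
  max_eq_left ((min_le_right _ _).trans (by linarith))

lemma tri_of_mem01 {s : ℝ} (h0 : 0 ≤ s) (h1 : s ≤ 1) : tri s = s := by
  unfold tri; rw [min_eq_left (by linarith), max_eq_right h0]

lemma tri_of_mem12 {s : ℝ} (h0 : 1 ≤ s) (h1 : s ≤ 2) : tri s = 2 - s := by
  unfold tri; rw [min_eq_right (by linarith), max_eq_right (by linarith)]

lemma vol_Ico_inter_Ioc (a b c d : ℝ) :
    volume (Ico a b ∩ Ioc c d) = ENNReal.ofReal (min b d - max a c) := by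
  apply le_antisymm
  · calc volume (Ico a b ∩ Ioc c d) ≤ volume (Icc (max a c) (min b d)) := by
          apply measure_mono
          rintro y ⟨⟨h1, h2⟩, h3, h4⟩
          exact ⟨max_le h1 h3.le, le_min h2.le h4⟩
      _ = ENNReal.ofReal (min b d - max a c) := Real.volume_Icc
  · rw [← Real.volume_Ioo]
    apply measure_mono
    rintro y ⟨h1, h2⟩
    rw [lt_min_iff] at h2; rw [max_lt_iff] at h1
    exact ⟨⟨h1.1.le, h2.1⟩, h1.2, h2.2.le⟩

lemma min_max_eq_tri (m n x : ℝ) :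
    max 0 (min (m + 1) (x - n) - max m (x - n - 1)) = tri (x - m - n) := by
  unfold tri
  simp only [min_def, max_def]
  split_ifs <;> linarith

lemma tri_affine (a : ℤ) (y : ℝ) (h1 : (a : ℝ) ≤ y) (h2 : y ≤ a + 1) :
    tri y = ((a : ℝ) + 1 - y) * tri a + (y - a) * tri (a + 1) := by
  obtain h | h | h | h : a ≤ -1 ∨ a = 0 ∨ a = 1 ∨ 2 ≤ a := by omega
  · have ha : (a : ℝ) ≤ -1 := by exact_mod_cast h
    rw [tri_of_nonpos (by linarith), tri_of_nonpos (by linarith),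
      tri_of_nonpos (by linarith)]; ring
  · subst h; push_cast at *
    rw [tri_of_mem01 (by linarith) (by linarith), tri_of_nonpos (by norm_num),
      show ((0:ℝ) + 1) = 1 by ring, tri_of_mem01 (by norm_num) (by norm_num)]
    ring
  · subst h; push_cast at *
    rw [tri_of_mem12 (by linarith) (by linarith),
      tri_of_mem01 (by norm_num) (by norm_num),
      show ((1:ℝ) + 1) = 2 by ring, tri_of_ge_two (by norm_num)]
    ring
  · have ha : (2 : ℝ) ≤ a := by exact_mod_cast h
    rw [tri_of_ge_two (by linarith), tri_of_ge_two (by linarith),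
      tri_of_ge_two (by linarith)]; ring

lemma tri_continuous : Continuous tri := by
  unfold tri; fun_prop


lemma autoconv_stepFun_eq (N : ℕ) (v : Fin N → ℝ) (x : ℝ) :
    autoconv (stepFun N v) x =
      ∑ m : Fin N, ∑ n : Fin N,
        v m * v n * tri (x - ((m : ℕ) : ℝ) - ((n : ℕ) : ℝ)) := by
  have hrw : ∀ t : ℝ, stepFun N v t * stepFun N v (x - t)
      = ∑ m : Fin N, ∑ n : Fin N,
          (Ico ((m : ℕ) : ℝ) ((m : ℕ) + 1) ∩
            Ioc (x - ((n : ℕ) : ℝ) - 1) (x - ((n : ℕ) : ℝ))).indicator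
            (fun _ => v m * v n) t := by
    intro t
    unfold stepFun
    rw [Finset.sum_mul_sum]
    refine Finset.sum_congr rfl fun m _ => Finset.sum_congr rfl fun n _ => ?_
    simp only [Set.indicator_apply, Set.mem_inter_iff, Set.mem_Ico, Set.mem_Ioc,
      Pi.one_apply, mul_ite, mul_one, mul_zero, ite_mul, zero_mul]
    by_cases h1 : ((m : ℕ) : ℝ) ≤ t ∧ t < ((m : ℕ) : ℝ) + 1
    · by_cases h2 : ((n : ℕ) : ℝ) ≤ x - t ∧ x - t < ((n : ℕ) : ℝ) + 1
      · rw [if_pos h1, if_pos h2,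
          if_pos ⟨h1, by constructor <;> [linarith [h2.2]; linarith [h2.1]]⟩]
      · rw [if_pos h1, if_neg h2, if_neg]
        rintro ⟨-, hc1, hc2⟩
        exact h2 ⟨by linarith, by linarith⟩
    · rw [if_neg h1, if_neg (show ¬((((m : ℕ) : ℝ) ≤ t ∧ t < ((m : ℕ) : ℝ) + 1) ∧
          x - ((n : ℕ) : ℝ) - 1 < t ∧ t ≤ x - ((n : ℕ) : ℝ)) from fun hc => h1 hc.1), ite_self]
  have hmeas : ∀ (m n : Fin N), MeasurableSet
      (Ico ((m : ℕ) : ℝ) ((m : ℕ) + 1) ∩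
        Ioc (x - ((n : ℕ) : ℝ) - 1) (x - ((n : ℕ) : ℝ))) :=
    fun m n => measurableSet_Ico.inter measurableSet_Ioc
  have hint : ∀ (m n : Fin N), Integrable
      ((Ico ((m : ℕ) : ℝ) ((m : ℕ) + 1) ∩
        Ioc (x - ((n : ℕ) : ℝ) - 1) (x - ((n : ℕ) : ℝ))).indicator
        (fun _ => v m * v n)) volume := by
    intro m n
    rw [integrable_indicator_iff (hmeas m n)]
    refine integrableOn_const (ne_of_lt ?_)
    exact lt_of_le_of_lt (measure_mono Set.inter_subset_left)
      (by rw [Real.volume_Ico]; exact ENNReal.ofReal_lt_top)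
  unfold autoconv
  rw [show (fun t => stepFun N v t * stepFun N v (x - t))
      = fun t => ∑ m : Fin N, ∑ n : Fin N,
          (Ico ((m : ℕ) : ℝ) ((m : ℕ) + 1) ∩
            Ioc (x - ((n : ℕ) : ℝ) - 1) (x - ((n : ℕ) : ℝ))).indicator
            (fun _ => v m * v n) t from funext hrw]
  rw [integral_finset_sum _ (fun m _ => integrable_finset_sum _ (fun n _ => hint m n))]
  refine Finset.sum_congr rfl fun m _ => ?_
  rw [integral_finset_sum _ (fun n _ => hint m n)]
  refine Finset.sum_congr rfl fun n _ => ?_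
  rw [integral_indicator_const _ (hmeas m n), measureReal_def, vol_Ico_inter_Ioc, smul_eq_mul, mul_comm]
  congr 1
  rw [← min_max_eq_tri]
  rcases le_total 0 (min (((m : ℕ) : ℝ) + 1) (x - ((n : ℕ) : ℝ))
      - max ((m : ℕ) : ℝ) (x - ((n : ℕ) : ℝ) - 1)) with h | h
  · rw [ENNReal.toReal_ofReal h, max_eq_right h]
  · rw [ENNReal.ofReal_of_nonpos h, ENNReal.toReal_zero, max_eq_left h]

lemma autoconv_stepFun_nonneg (N : ℕ) (v : Fin N → ℝ) (hv : ∀ n, 0 ≤ v n) (x : ℝ) :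
    0 ≤ autoconv (stepFun N v) x := by
  rw [autoconv_stepFun_eq]
  exact Finset.sum_nonneg fun m _ => Finset.sum_nonneg fun n _ =>
    mul_nonneg (mul_nonneg (hv m) (hv n)) (tri_nonneg _)

lemma autoconv_stepFun_continuous (N : ℕ) (v : Fin N → ℝ) :
    Continuous (autoconv (stepFun N v)) := by
  rw [show autoconv (stepFun N v)
      = fun x => ∑ m : Fin N, ∑ n : Fin N,
          v m * v n * tri (x - ((m : ℕ) : ℝ) - ((n : ℕ) : ℝ))
      from funext (autoconv_stepFun_eq N v)]
  exact continuous_finset_sum _ fun m _ => continuous_finset_sum _ fun n _ =>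
    continuous_const.mul (tri_continuous.comp (by fun_prop))

lemma autoconv_stepFun_zero (N : ℕ) (v : Fin N → ℝ) {x : ℝ}
    (h : x ≤ 0 ∨ ((2 * N : ℕ) : ℝ) ≤ x) : autoconv (stepFun N v) x = 0 := by
  rw [autoconv_stepFun_eq]
  refine Finset.sum_eq_zero fun m _ => Finset.sum_eq_zero fun n _ => ?_
  rcases h with h | h
  · rw [tri_of_nonpos (by
      have h1 : (0:ℝ) ≤ ((m : ℕ) : ℝ) := Nat.cast_nonneg _
      have h2 : (0:ℝ) ≤ ((n : ℕ) : ℝ) := Nat.cast_nonneg _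
      linarith), mul_zero]
  · have hm : ((m : ℕ) : ℝ) + 1 ≤ (N : ℝ) := by exact_mod_cast m.isLt
    have hn : ((n : ℕ) : ℝ) + 1 ≤ (N : ℝ) := by exact_mod_cast n.isLt
    have h2N : ((2 * N : ℕ) : ℝ) = 2 * (N : ℝ) := by push_cast; ring
    rw [tri_of_ge_two (by rw [h2N] at h; linarith), mul_zero]

lemma autoconv_stepFun_interp (N : ℕ) (v : Fin N → ℝ) (j : ℕ) (x : ℝ)
    (h1 : (j : ℝ) ≤ x) (h2 : x ≤ (j : ℝ) + 1) :
    autoconv (stepFun N v) x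
      = ((j : ℝ) + 1 - x) * autoconv (stepFun N v) (j : ℝ)
        + (x - (j : ℝ)) * autoconv (stepFun N v) ((j : ℝ) + 1) := by
  rw [autoconv_stepFun_eq, autoconv_stepFun_eq, autoconv_stepFun_eq,
    Finset.mul_sum, Finset.mul_sum, ← Finset.sum_add_distrib]
  refine Finset.sum_congr rfl fun m _ => ?_
  rw [Finset.mul_sum, Finset.mul_sum, ← Finset.sum_add_distrib]
  refine Finset.sum_congr rfl fun n _ => ?_
  have h := tri_affine ((j : ℤ) - (m : ℕ) - (n : ℕ)) (x - ((m : ℕ) : ℝ) - ((n : ℕ) : ℝ))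
    (by push_cast; linarith) (by push_cast; linarith)
  push_cast at h
  rw [h, show ((j : ℝ) + 1 - ((m : ℕ) : ℝ) - ((n : ℕ) : ℝ))
      = ((j : ℝ) - ((m : ℕ) : ℝ) - ((n : ℕ) : ℝ) + 1) from by ring]
  ring

/-- For a nonnegative step function `f = Σ v_n 1_{[n,n+1)}`, the `L^∞` norm of
`f ∗ f` is the maximum of its values at the integers `0, 1, …, 2N - 1`. -/
theorem Linfty_norm_autoconv_stepFun (N : ℕ) (hN : 1 ≤ N) (v : Fin N → ℝ)
    (hv : ∀ n, 0 ≤ v n) :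
    eLpNorm (autoconv (stepFun N v)) ⊤ volume =
      ENNReal.ofReal
        ((Finset.range (2 * N)).sup' (Finset.nonempty_range_iff.mpr (by omega))
          (fun j => autoconv (stepFun N v) (j : ℝ))) := by
  set g := autoconv (stepFun N v) with hg
  set M := (Finset.range (2 * N)).sup' (Finset.nonempty_range_iff.mpr (by omega))
    (fun j => autoconv (stepFun N v) (j : ℝ)) with hMdef
  have hM0 : 0 ≤ M := by
    have h0 : g ((0 : ℕ) : ℝ) ≤ M :=
      Finset.le_sup' (fun j : ℕ => g (j : ℝ)) (Finset.mem_range.mpr (by omega))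
    rw [hg, show (((0 : ℕ) : ℝ)) = (0 : ℝ) by norm_num,
      autoconv_stepFun_zero N v (Or.inl le_rfl)] at h0
    exact h0
  have hle : ∀ j : ℕ, j ≤ 2 * N → g (j : ℝ) ≤ M := by
    intro j hj
    rcases eq_or_lt_of_le hj with rfl | h
    · rw [hg, autoconv_stepFun_zero N v (Or.inr le_rfl)]; exact hM0
    · exact Finset.le_sup' (fun j : ℕ => g (j : ℝ)) (Finset.mem_range.mpr h)
  have hub : ∀ x : ℝ, g x ≤ M := by
    intro x
    rcases le_or_gt x 0 with hx | hx
    · rw [hg, autoconv_stepFun_zero N v (Or.inl hx)]; exact hM0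
    rcases le_or_gt (((2 * N : ℕ) : ℝ)) x with hx2 | hx2
    · rw [hg, autoconv_stepFun_zero N v (Or.inr hx2)]; exact hM0
    have hx0 : (0 : ℝ) ≤ x := hx.le
    set j := ⌊x⌋₊ with hj
    have hjx : (j : ℝ) ≤ x := Nat.floor_le hx0
    have hxj : x < (j : ℝ) + 1 := Nat.lt_floor_add_one x
    have hj2N : j < 2 * N := (Nat.floor_lt hx0).2 hx2
    rw [hg, autoconv_stepFun_interp N v j x hjx hxj.le, ← hg]
    have a1 : g (j : ℝ) ≤ M := hle j (by omega)
    have a2 : g ((j : ℝ) + 1) ≤ M := by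
      have := hle (j + 1) (by omega)
      push_cast at this
      exact this
    nlinarith [mul_le_mul_of_nonneg_left a1 (show (0:ℝ) ≤ (j : ℝ) + 1 - x by linarith),
      mul_le_mul_of_nonneg_left a2 (show (0:ℝ) ≤ x - (j : ℝ) by linarith)]
  obtain ⟨j0, hj0mem, hj0⟩ := Finset.exists_mem_eq_sup'
    (Finset.nonempty_range_iff.mpr (show 2 * N ≠ 0 by omega))
    (fun j : ℕ => autoconv (stepFun N v) (j : ℝ))
  rw [eLpNorm_exponent_top]
  set E := eLpNormEssSup g volume with hE
  have key : ∀ ε : ℝ, 0 < ε → ε < M → ENNReal.ofReal (M - ε) ≤ E := by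
    intro ε hε hεM
    by_contra hcon
    rw [not_le] at hcon
    have hgc := (autoconv_stepFun_continuous N v).continuousAt (x := ((j0 : ℕ) : ℝ))
    have hU : g ⁻¹' Set.Ioi (M - ε) ∈ nhds ((j0 : ℝ)) := by
      apply hgc
      apply Ioi_mem_nhds
      rw [← hg, show g ((j0 : ℕ) : ℝ) = M from hj0.symm]
      linarith
    obtain ⟨δ, hδ, hball⟩ := Metric.mem_nhds_iff.1 hU
    have hae := ae_le_eLpNormEssSup (f := g) (μ := volume)
    have hnull : volume (Metric.ball ((j0 : ℝ)) δ) = 0 := by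
      refine measure_mono_null ?_ (ae_iff.1 hae)
      intro y hy
      have hgy : M - ε < g y := hball hy
      simp only [Set.mem_setOf_eq, not_le]
      calc E < ENNReal.ofReal (M - ε) := hcon
        _ ≤ (‖g y‖₊ : ENNReal) := by
            rw [← enorm_eq_nnnorm, ← ofReal_norm]
            exact ENNReal.ofReal_le_ofReal (hgy.le.trans (le_abs_self _))
    exact absurd hnull (ne_of_gt (Metric.measure_ball_pos _ _ hδ))
  refine le_antisymm ?_ ?_
  · refine eLpNormEssSup_le_of_ae_bound (C := M) (Filter.Eventually.of_forall fun x => ?_)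
    rw [Real.norm_eq_abs, abs_le]
    exact ⟨by linarith [autoconv_stepFun_nonneg N v hv x], hub x⟩
  · by_contra hc
    rw [not_le] at hc
    have hEtop : E ≠ ⊤ := (hc.trans ENNReal.ofReal_lt_top).ne
    have hE' : E.toReal < M := by
      have := (ENNReal.toReal_lt_toReal hEtop ENNReal.ofReal_ne_top).2 hc
      rwa [ENNReal.toReal_ofReal hM0] at this
    have ht0 : 0 ≤ E.toReal := ENNReal.toReal_nonneg
    have h1 := key ((M - E.toReal) / 2) (by linarith) (by linarith)
    have h2 : M - (M - E.toReal) / 2 ≤ E.toReal :=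
      (ENNReal.ofReal_le_iff_le_toReal hEtop).1 h1
    linarith
end

section
/- Let N ≥ 1, let v : {0, …, N−1} → ℝ be real numbers, let f = Σ_{n=0}^{N−1} v_n 1_{[n,n+1)}, and set L_j = (f ∗ f)(j) for integer j. Then ‖f ∗ f‖²_{L²(ℝ)} = (1/3) Σ_{j=0}^{2N−1} (L_j² + L_j L_{j+1} + L_{j+1}²). -/
open MeasureTheory
open scoped ENNReal NNReal

namespace AutoconvAux

/-- triangle (hat) function: convolution of unit indicators. -/
noncomputable def tri (s : ℝ) : ℝ := max 0 (min 1 s - max 0 (s - 1))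

lemma tri_of_nonpos {s : ℝ} (h : s ≤ 0) : tri s = 0 := by
  unfold tri
  rw [min_eq_right (by linarith : s ≤ 1), max_eq_left (by linarith : s - 1 ≤ 0), sub_zero,
    max_eq_left h]

lemma tri_of_mem1 {s : ℝ} (h0 : 0 ≤ s) (h1 : s ≤ 1) : tri s = s := by
  unfold tri
  rw [min_eq_right h1, max_eq_left (by linarith : s - 1 ≤ 0), sub_zero, max_eq_right h0]

lemma tri_of_mem2 {s : ℝ} (h1 : 1 ≤ s) (h2 : s ≤ 2) : tri s = 2 - s := by
  unfold tri
  rw [min_eq_left h1, max_eq_right (by linarith : (0:ℝ) ≤ s - 1),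
    max_eq_right (by linarith : (0:ℝ) ≤ 1 - (s - 1))]
  ring

lemma tri_of_ge_two {s : ℝ} (h : 2 ≤ s) : tri s = 0 := by
  unfold tri
  rw [min_eq_left (by linarith : (1:ℝ) ≤ s), max_eq_right (by linarith : (0:ℝ) ≤ s - 1),
    max_eq_left (by linarith : 1 - (s - 1) ≤ (0:ℝ))]

lemma continuous_tri : Continuous tri := by
  unfold tri
  exact continuous_const.max ((continuous_const.min continuous_id).sub
    (continuous_const.max (continuous_id.sub continuous_const)))

/-- The intersection set showing up in the convolution of two unit indicators. -/
lemma indicator_mul_indicator (a c x t : ℝ) :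
    (Set.Ico a (a+1)).indicator (1 : ℝ → ℝ) t * (Set.Ico c (c+1)).indicator 1 (x - t)
      = ((Set.Ico a (a+1)) ∩ Set.Ioc (x - (c+1)) (x - c)).indicator 1 t := by
  have hmem : t ∈ Set.Ioc (x - (c+1)) (x - c) ↔ x - t ∈ Set.Ico c (c+1) := by
    simp only [Set.mem_Ioc, Set.mem_Ico]
    constructor <;> rintro ⟨h1, h2⟩ <;> constructor <;> linarith
  by_cases h1 : t ∈ Set.Ico a (a+1) <;> by_cases h2 : x - t ∈ Set.Ico c (c+1) <;>
    simp [Set.indicator_apply, Set.mem_inter_iff, hmem, h1, h2]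

lemma measurableSet_S (a c x : ℝ) :
    MeasurableSet ((Set.Ico a (a+1)) ∩ Set.Ioc (x - (c+1)) (x - c)) :=
  measurableSet_Ico.inter measurableSet_Ioc

lemma volume_S (a c x : ℝ) :
    volume ((Set.Ico a (a+1)) ∩ Set.Ioc (x - (c+1)) (x - c))
      = ENNReal.ofReal (min (a+1) (x - c) - max a (x - (c+1))) := by
  refine le_antisymm ?_ ?_
  · rw [← Real.volume_Icc]
    refine measure_mono ?_
    rintro t ⟨⟨h1, h2⟩, h3, h4⟩
    exact ⟨max_le h1 h3.le, le_min h2.le h4⟩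
  · rw [← Real.volume_Ioo]
    refine measure_mono ?_
    rintro t ⟨h1, h2⟩
    rw [max_lt_iff] at h1
    rw [lt_min_iff] at h2
    exact ⟨⟨h1.1.le, h2.1⟩, h1.2, h2.2.le⟩

lemma integral_hat (a c x : ℝ) :
    ∫ t, (Set.Ico a (a+1)).indicator (1 : ℝ → ℝ) t * (Set.Ico c (c+1)).indicator 1 (x - t)
      = tri (x - a - c) := by
  simp only [indicator_mul_indicator]
  rw [integral_indicator_one (measurableSet_S a c x), measureReal_def, volume_S]
  have hid : min (a+1) (x - c) - max a (x - (c+1))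
      = min 1 (x - a - c) - max 0 (x - a - c - 1) := by
    rcases le_total (x - a - c) 1 with h | h
    · rw [min_eq_right (by linarith : x - c ≤ a + 1), max_eq_left (by linarith : x - (c+1) ≤ a),
        min_eq_right h, max_eq_left (by linarith)]
      ring
    · rw [min_eq_left (by linarith : a + 1 ≤ x - c), max_eq_right (by linarith : a ≤ x - (c+1)),
        min_eq_left h, max_eq_right (by linarith)]
      ring
  rw [hid]
  rcases le_total (min 1 (x - a - c) - max 0 (x - a - c - 1)) 0 with h | h
  · rw [ENNReal.ofReal_eq_zero.2 h, ENNReal.toReal_zero]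
    unfold tri
    rw [max_eq_left h]
  · rw [ENNReal.toReal_ofReal h]
    unfold tri
    rw [max_eq_right h]

lemma integrable_hat (a c x : ℝ) :
    Integrable (fun t => (Set.Ico a (a+1)).indicator (1 : ℝ → ℝ) t
      * (Set.Ico c (c+1)).indicator 1 (x - t)) volume := by
  simp only [indicator_mul_indicator]
  rw [integrable_indicator_iff (measurableSet_S a c x)]
  refine integrableOn_const (ne_of_lt ?_)
  calc volume ((Set.Ico a (a+1)) ∩ Set.Ioc (x - (c+1)) (x - c))
      ≤ volume (Set.Ico a (a+1)) := measure_mono Set.inter_subset_left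
    _ < ⊤ := by rw [Real.volume_Ico]; exact ENNReal.ofReal_lt_top

/-- Key formula: the autoconvolution of the step function is a combination of hats. -/
lemma autoconv_stepFun (N : ℕ) (v : Fin N → ℝ) (x : ℝ) :
    autoconv (stepFun N v) x
      = ∑ p : Fin N × Fin N, v p.1 * v p.2 * tri (x - (p.1 : ℕ) - (p.2 : ℕ)) := by
  unfold autoconv stepFun
  have h1 : ∀ t : ℝ,
      (∑ m : Fin N, v m * (Set.Ico ((m : ℕ) : ℝ) ((m : ℕ) + 1)).indicator 1 t)
        * (∑ n : Fin N, v n * (Set.Ico ((n : ℕ) : ℝ) ((n : ℕ) + 1)).indicator 1 (x - t))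
      = ∑ p : Fin N × Fin N, (v p.1 * v p.2)
          * ((Set.Ico ((p.1 : ℕ) : ℝ) ((p.1 : ℕ) + 1)).indicator 1 t
            * (Set.Ico ((p.2 : ℕ) : ℝ) ((p.2 : ℕ) + 1)).indicator 1 (x - t)) := by
    intro t
    rw [Finset.sum_mul_sum, ← Finset.univ_product_univ, Finset.sum_product]
    exact Finset.sum_congr rfl fun m _ => Finset.sum_congr rfl fun n _ => by ring
  simp only [h1]
  rw [integral_finset_sum _ (fun p _ => (integrable_hat _ _ x).const_mul _)]
  exact Finset.sum_congr rfl fun p _ => by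
    rw [MeasureTheory.integral_const_mul, integral_hat]

/-- linear interpolation of the hat on unit intervals with integer endpoints -/
lemma tri_interp' {c u : ℝ} (hc : c ≤ -1 ∨ c = 0 ∨ c = 1 ∨ 2 ≤ c) (h0 : 0 ≤ u) (h1 : u ≤ 1) :
    tri (u + c) = tri c * (1 - u) + tri (c + 1) * u := by
  rcases hc with h | h | h | h
  · rw [tri_of_nonpos (by linarith), tri_of_nonpos (by linarith), tri_of_nonpos (by linarith)]
    ring
  · subst h
    rw [tri_of_mem1 (by linarith) (by linarith), tri_of_nonpos (le_refl 0),
      tri_of_mem1 (by norm_num) (by norm_num)]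
    ring
  · subst h
    rw [tri_of_mem2 (by linarith) (by linarith), tri_of_mem1 (by norm_num) (by norm_num),
      tri_of_ge_two (by norm_num)]
    ring
  · rw [tri_of_ge_two (by linarith), tri_of_ge_two (by linarith), tri_of_ge_two (by linarith)]
    ring

lemma int_gap (j k : ℕ) :
    ((j:ℝ) - k ≤ -1) ∨ ((j:ℝ) - k = 0) ∨ ((j:ℝ) - k = 1) ∨ (2 ≤ (j:ℝ) - k) := by
  rcases (by omega : j + 1 ≤ k ∨ j = k ∨ j = k + 1 ∨ k + 2 ≤ j) with h | h | h | h
  · left; have : (j:ℝ) + 1 ≤ k := by exact_mod_cast h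
    linarith
  · right; left; rw [h]; ring
  · right; right; left; rw [h]; push_cast; ring
  · right; right; right
    have : (k:ℝ) + 2 ≤ j := by exact_mod_cast h
    linarith

/-- On `[j, j+1]` the autoconvolution is the linear interpolation of its endpoint values. -/
lemma autoconv_linear (N : ℕ) (v : Fin N → ℝ) (j : ℕ) {x : ℝ}
    (hx : (j:ℝ) ≤ x) (hx2 : x ≤ (j:ℝ) + 1) :
    autoconv (stepFun N v) x
      = autoconv (stepFun N v) (j:ℝ) * ((j:ℝ) + 1 - x)
        + autoconv (stepFun N v) ((j:ℝ) + 1) * (x - (j:ℝ)) := by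
  rw [autoconv_stepFun, autoconv_stepFun, autoconv_stepFun, Finset.sum_mul, Finset.sum_mul,
    ← Finset.sum_add_distrib]
  refine Finset.sum_congr rfl fun p _ => ?_
  have hd := int_gap j ((p.1 : ℕ) + (p.2 : ℕ))
  have key := tri_interp' (c := (j:ℝ) - ((p.1 : ℕ) + (p.2 : ℕ) : ℕ)) (u := x - j)
    (by push_cast at hd ⊢; exact hd) (by linarith) (by linarith)
  have e1 : x - (p.1 : ℕ) - (p.2 : ℕ)
      = (x - j) + ((j:ℝ) - (((p.1 : ℕ) + (p.2 : ℕ) : ℕ) : ℝ)) := by push_cast; ring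
  have e2 : (j:ℝ) - (p.1 : ℕ) - (p.2 : ℕ) = (j:ℝ) - (((p.1 : ℕ) + (p.2 : ℕ) : ℕ) : ℝ) := by
    push_cast; ring
  have e3 : (j:ℝ) + 1 - (p.1 : ℕ) - (p.2 : ℕ)
      = ((j:ℝ) - (((p.1 : ℕ) + (p.2 : ℕ) : ℕ) : ℝ)) + 1 := by push_cast; ring
  rw [e1, key, e2, e3]
  ring

lemma autoconv_vanish (N : ℕ) (v : Fin N → ℝ) {x : ℝ}
    (hx : x ≤ 0 ∨ (2 * N : ℝ) ≤ x) : autoconv (stepFun N v) x = 0 := by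
  rw [autoconv_stepFun]
  refine Finset.sum_eq_zero fun p _ => ?_
  rcases hx with h | h
  · rw [tri_of_nonpos (by
      have h1 : (0:ℝ) ≤ (p.1 : ℕ) := Nat.cast_nonneg _
      have h2 : (0:ℝ) ≤ (p.2 : ℕ) := Nat.cast_nonneg _
      linarith)]
    ring
  · rw [tri_of_ge_two (by
      have h1 : ((p.1 : ℕ) : ℝ) ≤ (N:ℝ) - 1 := by
        have := p.1.isLt; have : ((p.1 : ℕ) : ℝ) + 1 ≤ N := by exact_mod_cast this
        linarith
      have h2 : ((p.2 : ℕ) : ℝ) ≤ (N:ℝ) - 1 := by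
        have := p.2.isLt; have : ((p.2 : ℕ) : ℝ) + 1 ≤ N := by exact_mod_cast this
        linarith
      linarith)]
    ring

lemma continuous_autoconv (N : ℕ) (v : Fin N → ℝ) : Continuous (autoconv (stepFun N v)) := by
  have : autoconv (stepFun N v)
      = fun x => ∑ p : Fin N × Fin N, v p.1 * v p.2 * tri (x - (p.1 : ℕ) - (p.2 : ℕ)) :=
    funext fun x => autoconv_stepFun N v x
  rw [this]
  exact continuous_finset_sum _ fun p _ => continuous_const.mul
    (continuous_tri.comp ((continuous_id.sub continuous_const).sub continuous_const))

/-- the elementary interval integral -/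
lemma interval_quad (A B : ℝ) (j : ℕ) :
    ∫ x in (j:ℝ)..((j:ℝ)+1), (A * ((j:ℝ) + 1 - x) + B * (x - (j:ℝ)))^2
      = (A^2 + A*B + B^2)/3 := by
  have step1 : ∫ x in (j:ℝ)..((j:ℝ)+1), (A * ((j:ℝ) + 1 - x) + B * (x - (j:ℝ)))^2
      = ∫ x in (j:ℝ)..((j:ℝ)+1), (fun u => (A * (1 - u) + B * u)^2) (x - (j:ℝ)) := by
    refine intervalIntegral.integral_congr fun x _ => ?_
    dsimp only
    ring
  rw [step1, intervalIntegral.integral_comp_sub_right (fun u => (A * (1 - u) + B * u)^2) (j:ℝ)]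
  have e0 : (j:ℝ) - (j:ℝ) = 0 := by ring
  have e1 : (j:ℝ) + 1 - (j:ℝ) = 1 := by ring
  rw [e0, e1]
  have expand : ∀ u : ℝ, (A * (1 - u) + B * u)^2
      = A^2 + (2*A*B - 2*A^2) * u + (A^2 - 2*A*B + B^2) * u^2 := fun u => by ring
  simp only [expand]
  have i1 : IntervalIntegrable (fun u : ℝ => A^2 + (2*A*B - 2*A^2) * u) volume 0 1 :=
    (continuous_const.add (continuous_const.mul continuous_id)).intervalIntegrable _ _
  have i2 : IntervalIntegrable (fun u : ℝ => (A^2 - 2*A*B + B^2) * u^2) volume 0 1 :=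
    (continuous_const.mul (continuous_pow 2)).intervalIntegrable _ _
  have i3 : IntervalIntegrable (fun u : ℝ => (A:ℝ)^2) volume 0 1 :=
    intervalIntegrable_const
  have i4 : IntervalIntegrable (fun u : ℝ => (2*A*B - 2*A^2) * u) volume 0 1 :=
    (continuous_const.mul continuous_id).intervalIntegrable _ _
  rw [intervalIntegral.integral_add (i1) (i2), intervalIntegral.integral_add i3 i4,
    intervalIntegral.integral_const, intervalIntegral.integral_const_mul,
    intervalIntegral.integral_const_mul, integral_id, integral_pow]
  norm_num
  ring

end AutoconvAux

open AutoconvAux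
/-- With `L j = (f ∗ f)(j)` for the step function `f = Σ v_n 1_{[n,n+1)}`,
`‖f ∗ f‖²_{L²} = (1/3) Σ_{j=0}^{2N-1} (L_j² + L_j L_{j+1} + L_{j+1}²)`. -/
theorem L2_norm_sq_autoconv_stepFun (N : ℕ) (hN : 1 ≤ N) (v : Fin N → ℝ)
    (L : ℕ → ℝ) (hL : ∀ j, L j = autoconv (stepFun N v) (j : ℝ)) :
    (eLpNorm (autoconv (stepFun N v)) 2 volume) ^ 2 =
      ENNReal.ofReal
        ((1 / 3) * ∑ j ∈ Finset.range (2 * N),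
          (L j ^ 2 + L j * L (j + 1) + L (j + 1) ^ 2)) := by
  set g := autoconv (stepFun N v) with hg
  have hgc : Continuous g := continuous_autoconv N v
  have hg2c : Continuous (fun x => g x ^ 2) := hgc.pow 2
  have hcs : HasCompactSupport (fun x => g x ^ 2) := by
    refine HasCompactSupport.intro (isCompact_Icc (a := (0:ℝ)) (b := (2*N:ℝ))) fun x hx => ?_
    have : g x = 0 := by
      refine autoconv_vanish N v ?_
      simp only [Set.mem_Icc, not_and_or, not_le] at hx
      rcases hx with h | h
      · exact Or.inl h.le
      · exact Or.inr h.le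
    rw [this]; ring
  have hint : Integrable (fun x => g x ^ 2) volume :=
    hg2c.integrable_of_hasCompactSupport hcs
  -- LHS as ofReal of a real integral
  have lhs_eq : (eLpNorm g 2 volume) ^ 2 = ENNReal.ofReal (∫ x, g x ^ 2) := by
    rw [eLpNorm_eq_lintegral_rpow_enorm_toReal two_ne_zero ENNReal.ofNat_ne_top]
    have h2 : (2 : ℝ≥0∞).toReal = (2:ℝ) := by norm_num
    rw [h2, ← ENNReal.rpow_natCast _ 2, ← ENNReal.rpow_mul,
      show (1/(2:ℝ)) * ((2:ℕ):ℝ) = 1 by norm_num, ENNReal.rpow_one]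
    have hpt : ∀ x : ℝ, ‖g x‖ₑ ^ (2:ℝ) = ENNReal.ofReal (g x ^ 2) := by
      intro x
      have h1 : ‖g x‖ₑ ^ (2:ℝ) = ‖g x‖ₑ ^ (2:ℕ) := by
        rw [← ENNReal.rpow_natCast]; norm_num
      rw [h1, ← ofReal_norm, ← ENNReal.ofReal_pow (norm_nonneg _)]
      congr 1
      rw [Real.norm_eq_abs, sq_abs]
    simp only [hpt]
    rw [← ofReal_integral_eq_lintegral_ofReal hint (ae_of_all volume fun x => sq_nonneg _)]
  rw [lhs_eq]
  -- per-interval computation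
  have hper : ∀ j : ℕ, ∫ x in Set.Ico (j:ℝ) ((j:ℝ)+1), g x ^ 2
      = (L j ^ 2 + L j * L (j+1) + L (j+1) ^ 2)/3 := by
    intro j
    have hgx : Set.EqOn (fun x => g x ^ 2)
        (fun x => (L j * ((j:ℝ) + 1 - x) + L (j+1) * (x - (j:ℝ)))^2)
        (Set.Ico (j:ℝ) ((j:ℝ)+1)) := by
      intro x hx
      rcases hx with ⟨hx1, hx2⟩
      dsimp only
      have hLj : L j = g (j:ℝ) := hL j
      have hLj1 : L (j+1) = g ((j:ℝ)+1) := by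
        rw [hL (j+1)]; norm_num
      rw [hg, autoconv_linear N v j hx1 hx2.le, ← hg, ← hLj, ← hLj1]
    rw [setIntegral_congr_fun measurableSet_Ico hgx, integral_Ico_eq_integral_Ioo,
      ← integral_Ioc_eq_integral_Ioo,
      ← intervalIntegral.integral_of_le (by linarith : (j:ℝ) ≤ (j:ℝ)+1),
      interval_quad]
  -- decomposition of the real line integral
  have hdecomp : ∀ M : ℕ, ∫ x in Set.Ico (0:ℝ) (M:ℝ), g x ^ 2
      = ∑ j ∈ Finset.range M, ∫ x in Set.Ico (j:ℝ) ((j:ℝ)+1), g x ^ 2 := by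
    intro M
    induction M with
    | zero => simp
    | succ M ih =>
      rw [Finset.sum_range_succ, ← ih,
        ← setIntegral_union (Set.Ico_disjoint_Ico_same) measurableSet_Ico
          hint.integrableOn hint.integrableOn,
        Set.Ico_union_Ico_eq_Ico (by positivity : (0:ℝ) ≤ (M:ℝ)) (by linarith : (M:ℝ) ≤ (M:ℝ)+1)]
      push_cast
      ring_nf
  have hall : ∫ x, g x ^ 2 = ∫ x in Set.Ico (0:ℝ) ((2*N : ℕ):ℝ), g x ^ 2 := by
    refine (setIntegral_eq_integral_of_forall_compl_eq_zero fun x hx => ?_).symm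
    have : g x = 0 := by
      refine autoconv_vanish N v ?_
      simp only [Set.mem_Ico, not_and_or, not_le, not_lt] at hx
      rcases hx with h | h
      · exact Or.inl h.le
      · right; push_cast at h; linarith
    rw [this]; ring
  rw [hall, hdecomp (2*N)]
  congr 1
  rw [Finset.mul_sum]
  exact Finset.sum_congr rfl fun j _ => by rw [hper j]; ring
end
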